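/- Let G be a simple graph with spanning forest F, and let ℓ assign a natural-number level to each non-tree edge; for j ∈ ℕ let G_j be the subgraph of G whose edges are the edges of F together with the non-tree edges of level at least j. Let uv be an edge of F, and let e be a non-tree edge whose fundamental path contains uv; set i := ℓ(e), and assume that every non-tree edge whose fundamental path contains uv has level at most i. Let F' be the subgraph obtained from F by removing the edge uv and adding the edge e, and let ℓ' agree with ℓ on all edges of G outside F' other than uv, with ℓ'(uv) := i; let G'_j be the subgraph of G whose edges are the edges of F' together with the edges outside F' of ℓ'-level at least j. Then F' is a spanning forest of G, and for every j ∈ ℕ and all vertices a and b, a and b are biconnected in G_j if and only if they are biconnected in G'_j. -/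

import Mathlib

/-- Two vertices `a` and `b` of a simple graph `H` are *biconnected* in `H` if `a ≠ b` and
there exist two distinct paths from `a` to `b` in `H` whose only common vertices are
`a` and `b`. -/
def Biconnected {V : Type*} (H : SimpleGraph V) (a b : V) : Prop :=
  a ≠ b ∧ ∃ p q : H.Path a b, p ≠ q ∧
    ∀ x, x ∈ p.1.support → x ∈ q.1.support → (x = a ∨ x = b)

/-- For a spanning forest `F` of `G` and a level assignment `ℓ` on (non-tree) edges,
`levelGraph G F ℓ j` is the subgraph of `G` whose edges are the edges of `F` together
with the non-tree edges of level at least `j`. -/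
def levelGraph {V : Type*} (G F : SimpleGraph V) (ℓ : Sym2 V → ℕ) (j : ℕ) :
    SimpleGraph V :=
  F ⊔ SimpleGraph.fromEdgeSet {e : Sym2 V | e ∈ G.edgeSet ∧ e ∉ F.edgeSet ∧ j ≤ ℓ e}

open SimpleGraph Walk

section Helpers

variable {V : Type*}

/-- A path from `a` to `b` containing the edge `s(a,b)` is the single-edge walk. -/
lemma walk_eq_single {H : SimpleGraph V} {a b : V} (r : H.Walk a b) (hr : r.IsPath)
    (he : s(a, b) ∈ r.edges) : ∃ h : H.Adj a b, r = Walk.cons h Walk.nil := by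
  cases r with
  | nil => simp at he
  | cons h r' =>
    rename_i w
    rw [Walk.edges_cons, List.mem_cons] at he
    rw [Walk.cons_isPath_iff] at hr
    rcases he with he | he
    · rw [Sym2.eq_iff] at he
      rcases he with ⟨-, rfl⟩ | ⟨h1, h2⟩
      · have : r' = Walk.nil := Walk.isPath_iff_eq_nil.mp hr.1
        exact ⟨h, by rw [this]⟩
      · exact absurd h1 h.ne
    · exact absurd (r'.fst_mem_support_of_mem_edges he) hr.2

/-- Two distinct internally disjoint paths form a cycle. -/
lemma two_paths_cycle {H : SimpleGraph V} {a b : V} (hab : a ≠ b) (p q : H.Walk a b)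
    (hp : p.IsPath) (hq : q.IsPath) (hne : p ≠ q)
    (hdisj : ∀ z, z ∈ p.support → z ∈ q.support → z = a ∨ z = b) :
    (p.append q.reverse).IsCycle := by
  have hedis : ∀ e, e ∈ p.edges → e ∈ q.edges → False := by
    intro e hep heq
    induction e with
    | h z w =>
      have hzw : H.Adj z w := p.adj_of_mem_edges hep
      have hz := hdisj z (p.fst_mem_support_of_mem_edges hep)
        (q.fst_mem_support_of_mem_edges heq)
      have hw := hdisj w (p.snd_mem_support_of_mem_edges hep)
        (q.snd_mem_support_of_mem_edges heq)
      have hzw' : s(z, w) = s(a, b) := by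
        rcases hz with rfl | rfl <;> rcases hw with rfl | rfl
        · exact absurd rfl hzw.ne
        · rfl
        · exact Sym2.eq_swap
        · exact absurd rfl hzw.ne
      rw [hzw'] at hep heq
      obtain ⟨h1, hp1⟩ := walk_eq_single p hp hep
      obtain ⟨h2, hq1⟩ := walk_eq_single q hq heq
      exact hne (by rw [hp1, hq1])
  have hpnodup : p.support.Nodup := hp.support_nodup
  have hqrp : q.reverse.IsPath := hq.reverse
  have hqrnodup : q.reverse.support.Nodup := hqrp.support_nodup
  have hpt : a ∉ p.support.tail ∧ p.support.tail.Nodup := by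
    have := hpnodup; rw [p.support_eq_cons] at this
    exact List.nodup_cons.mp this
  have hqt : b ∉ q.reverse.support.tail ∧ q.reverse.support.tail.Nodup := by
    have := hqrnodup; rw [q.reverse.support_eq_cons] at this
    exact List.nodup_cons.mp this
  rw [Walk.isCycle_def]
  refine ⟨?_, ?_, ?_⟩
  · rw [Walk.isTrail_def, Walk.edges_append, List.nodup_append]
    refine ⟨hp.isTrail.edges_nodup, ?_, ?_⟩
    · rw [Walk.edges_reverse, List.nodup_reverse]; exact hq.isTrail.edges_nodup
    · intro e hep e' heq hee; subst hee
      rw [Walk.edges_reverse, List.mem_reverse] at heq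
      exact hedis e hep heq
  · intro hnil
    cases p with
    | nil => exact hab rfl
    | cons h r => simp [Walk.append] at hnil
  · rw [Walk.tail_support_append, List.nodup_append]
    refine ⟨hpt.2, hqt.2, ?_⟩
    intro z hz1 z' hz2 hzz; subst hzz
    have hz1' : z ∈ p.support := by rw [p.support_eq_cons]; exact List.mem_cons_of_mem _ hz1
    have hz2' : z ∈ q.support := by
      have : z ∈ q.reverse.support := by
        rw [q.reverse.support_eq_cons]; exact List.mem_cons_of_mem _ hz2
      rwa [Walk.support_reverse, List.mem_reverse] at this
    rcases hdisj z hz1' hz2' with rfl | rfl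
    · exact hpt.1 hz1
    · exact hqt.1 hz2

lemma walk_eq_of_support_eq {H : SimpleGraph V} {a b : V} (r : H.Walk a b) :
    ∀ s : H.Walk a b, r.support = s.support → r = s := by
  induction r with
  | nil =>
    intro s h
    cases s with
    | nil => rfl
    | cons h2 s' =>
      exfalso
      simp only [Walk.support_nil, Walk.support_cons, List.cons.injEq] at h
      exact s'.support_ne_nil h.2.symm
  | cons h' r' ih =>
    intro s hsup
    cases s with
    | nil =>
      exfalso
      simp only [Walk.support_nil, Walk.support_cons, List.cons.injEq] at hsup
      exact r'.support_ne_nil hsup.2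
    | cons h2 s' =>
      simp only [Walk.support_cons, List.cons.injEq] at hsup
      have htail := hsup.2
      rw [r'.support_eq_cons, s'.support_eq_cons] at htail
      injection htail with hw htl
      subst hw
      exact congrArg (fun t => Walk.cons h' t) (ih s' hsup.2)

lemma transfer_injective {H₁ H₂ : SimpleGraph V} {a b : V} {p q : H₁.Walk a b}
    (hpe : ∀ e ∈ p.edges, e ∈ H₂.edgeSet) (hqe : ∀ e ∈ q.edges, e ∈ H₂.edgeSet)
    (h : p.transfer H₂ hpe = q.transfer H₂ hqe) : p = q := by
  apply walk_eq_of_support_eq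
  have := congrArg Walk.support h
  rwa [Walk.support_transfer, Walk.support_transfer] at this

/-- Lifting a biconnectivity witness along edge containment. -/
lemma bicon_lift {H₁ H₂ : SimpleGraph V} {a b : V} (hab : a ≠ b)
    (p q : H₁.Path a b) (hne : p ≠ q)
    (hdisj : ∀ z, z ∈ p.1.support → z ∈ q.1.support → z = a ∨ z = b)
    (hpe : ∀ e ∈ p.1.edges, e ∈ H₂.edgeSet) (hqe : ∀ e ∈ q.1.edges, e ∈ H₂.edgeSet) :
    Biconnected H₂ a b := by
  refine ⟨hab, ⟨p.1.transfer H₂ hpe, p.2.transfer _⟩, ⟨q.1.transfer H₂ hqe, q.2.transfer _⟩,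
    ?_, ?_⟩
  · intro h
    apply hne
    have := congrArg Subtype.val h
    simp only at this
    exact Subtype.ext (transfer_injective hpe hqe this)
  · intro z hz1 hz2
    rw [Walk.support_transfer] at hz1 hz2
    exact hdisj z hz1 hz2

lemma reachable_mono' {H K : SimpleGraph V} (h : ∀ a b : V, H.Adj a b → K.Reachable a b)
    {a b : V} (hr : H.Reachable a b) : K.Reachable a b := by
  obtain ⟨w⟩ := hr
  induction w with
  | nil => exact Reachable.refl _
  | cons h' _ ih => exact (h _ _ h').trans ih

/-- Removing a bridge edge does not change biconnectivity. -/
lemma biconnected_deleteEdges {H : SimpleGraph V} {c d : V} (hcd : H.Adj c d)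
    (hnr : ¬ (H.deleteEdges {s(c, d)}).Reachable c d) (a b : V) :
    Biconnected H a b ↔ Biconnected (H.deleteEdges {s(c, d)}) a b := by
  have hE : (H.deleteEdges {s(c, d)}).edgeSet = H.edgeSet \ {s(c, d)} :=
    SimpleGraph.edgeSet_deleteEdges _
  constructor
  · intro h
    obtain ⟨hab, p, q, hne, hdisj⟩ := h
    have hnp : p.1 ≠ q.1 := fun h => hne (Subtype.ext h)
    have hcyc := two_paths_cycle hab p.1 q.1 p.2 q.2 hnp hdisj
    have hbr : H.IsBridge s(c, d) := SimpleGraph.isBridge_iff.mpr hnr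
    have hnot := (SimpleGraph.isBridge_iff_adj_and_forall_cycle_notMem hcd).mp hbr
      _ hcyc
    rw [Walk.edges_append, List.mem_append, Walk.edges_reverse, List.mem_reverse] at hnot
    push_neg at hnot
    refine bicon_lift hab p q hne hdisj ?_ ?_
    · intro e he
      rw [hE, Set.mem_diff, Set.mem_singleton_iff]
      exact ⟨p.1.edges_subset_edgeSet he, fun h => hnot.1 (h ▸ he)⟩
    · intro e he
      rw [hE, Set.mem_diff, Set.mem_singleton_iff]
      exact ⟨q.1.edges_subset_edgeSet he, fun h => hnot.2 (h ▸ he)⟩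
  · intro h
    obtain ⟨hab, p, q, hne, hdisj⟩ := h
    refine bicon_lift hab p q hne hdisj ?_ ?_
    · exact fun e he => (hE ▸ p.1.edges_subset_edgeSet he).1
    · exact fun e he => (hE ▸ q.1.edges_subset_edgeSet he).1

/-- Splitting reachability across a trail using an edge. -/
lemma reachable_split {F : SimpleGraph V} {u v : V} :
    ∀ {s t : V} (W : F.Walk s t), W.IsTrail → s(u, v) ∈ W.edges →
    ((F.deleteEdges {s(u, v)}).Reachable s u ∧ (F.deleteEdges {s(u, v)}).Reachable v t) ∨
    ((F.deleteEdges {s(u, v)}).Reachable s v ∧ (F.deleteEdges {s(u, v)}).Reachable u t) := by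
  intro s t W
  induction W with
  | nil => intro _ he; simp at he
  | @cons s w t h W' ih =>
    intro ht he
    rw [Walk.edges_cons, List.mem_cons] at he
    have ht' : W'.IsTrail := ht.of_cons
    rcases he with he | he
    · have hnot : s(u, v) ∉ W'.edges := by
        have := ht.edges_nodup
        rw [Walk.edges_cons] at this
        rw [he]
        exact (List.nodup_cons.mp this).1
      have hWr : (F.deleteEdges {s(u, v)}).Reachable w t :=
        ⟨W'.transfer _ (fun e heW => by
          rw [SimpleGraph.edgeSet_deleteEdges, Set.mem_diff, Set.mem_singleton_iff]
          exact ⟨W'.edges_subset_edgeSet heW, fun hh => hnot (hh ▸ heW)⟩)⟩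
      rw [Sym2.eq_iff] at he
      rcases he with ⟨rfl, rfl⟩ | ⟨rfl, rfl⟩
      · exact Or.inl ⟨Reachable.refl _, hWr⟩
      · exact Or.inr ⟨Reachable.refl _, hWr⟩
    · have hfirst : s(s, w) ≠ s(u, v) := by
        intro hh
        have := ht.edges_nodup
        rw [Walk.edges_cons] at this
        exact (List.nodup_cons.mp this).1 (by rw [hh]; exact he)
      have hsw : (F.deleteEdges {s(u, v)}).Reachable s w :=
        (SimpleGraph.deleteEdges_adj.mpr ⟨h, by simpa using hfirst⟩).reachable
      rcases ih ht' he with ⟨h1, h2⟩ | ⟨h1, h2⟩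
      · exact Or.inl ⟨hsw.trans h1, h2⟩
      · exact Or.inr ⟨hsw.trans h1, h2⟩

lemma levelGraph_edgeSet (G F : SimpleGraph V) (ℓ : Sym2 V → ℕ) (j : ℕ) :
    (levelGraph G F ℓ j).edgeSet =
      F.edgeSet ∪ {e | e ∈ G.edgeSet ∧ e ∉ F.edgeSet ∧ j ≤ ℓ e} := by
  rw [levelGraph, SimpleGraph.edgeSet_sup, SimpleGraph.edgeSet_fromEdgeSet]
  congr 1
  ext e
  simp only [Set.mem_diff, Set.mem_setOf_eq]
  exact ⟨fun h => h.1, fun h => ⟨h, G.not_isDiag_of_mem_edgeSet h.1⟩⟩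

end Helpers

/-- The swap lemma: replacing a tree edge `uv` of the spanning forest `F` by a non-tree
edge `e = xy` of maximum level `i` among the non-tree edges whose fundamental path
contains `uv`, and giving `uv` level `i`, yields a spanning forest `F'` of `G` such that
all the level graphs `G_j` and `G'_j` have the same biconnectivity relation. -/
theorem swap_preserves_biconnectivity {V : Type*} (G F : SimpleGraph V)
    (ℓ : Sym2 V → ℕ)
    (hFG : F ≤ G) (hacyc : F.IsAcyclic)
    (hspan : ∀ a b : V, F.Reachable a b ↔ G.Reachable a b)
    (u v x y : V) (huv : F.Adj u v)
    (hxyG : G.Adj x y) (hxyF : ¬ F.Adj x y)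
    (P : F.Path x y) (hP : s(u, v) ∈ P.1.edges)
    (i : ℕ) (hi : i = ℓ s(x, y))
    (hmax : ∀ (p q : V) (Q : F.Path p q), G.Adj p q → ¬ F.Adj p q →
      s(u, v) ∈ Q.1.edges → ℓ s(p, q) ≤ i)
    (F' : SimpleGraph V)
    (hF' : F' = F.deleteEdges {s(u, v)} ⊔ SimpleGraph.fromEdgeSet {s(x, y)})
    (ℓ' : Sym2 V → ℕ)
    (hℓ'uv : ℓ' s(u, v) = i)
    (hℓ' : ∀ e ∈ G.edgeSet, e ∉ F'.edgeSet → e ≠ s(u, v) → ℓ' e = ℓ e) :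
    F' ≤ G ∧ F'.IsAcyclic ∧ (∀ a b : V, F'.Reachable a b ↔ G.Reachable a b) ∧
      ∀ (j : ℕ) (a b : V),
        Biconnected (levelGraph G F ℓ j) a b ↔ Biconnected (levelGraph G F' ℓ' j) a b := by
  classical
  set D := F.deleteEdges {s(u, v)} with hD
  have hxyne : x ≠ y := hxyG.ne
  have huvF : s(u, v) ∈ F.edgeSet := (SimpleGraph.mem_edgeSet _).mpr huv
  have hxyGE : s(x, y) ∈ G.edgeSet := (SimpleGraph.mem_edgeSet _).mpr hxyG
  have hxyFE : s(x, y) ∉ F.edgeSet := fun h => hxyF ((SimpleGraph.mem_edgeSet _).mp h)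
  have huvxy : s(u, v) ≠ s(x, y) := fun h => hxyFE (h ▸ huvF)
  have hE' : F'.edgeSet = (F.edgeSet \ {s(u, v)}) ∪ {s(x, y)} := by
    rw [hF', SimpleGraph.edgeSet_sup, SimpleGraph.edgeSet_deleteEdges,
      SimpleGraph.edgeSet_fromEdgeSet]
    congr 1
    ext e
    simp only [Set.mem_diff, Set.mem_singleton_iff, Set.mem_setOf_eq]
    constructor
    · exact fun h => h.1
    · rintro rfl
      exact ⟨rfl, G.not_isDiag_of_mem_edgeSet hxyGE⟩
  have hDF' : D ≤ F' := by rw [hF']; exact le_sup_left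
  have hF'G : F' ≤ G := by
    rw [hF']
    apply sup_le ((SimpleGraph.deleteEdges_le _).trans hFG)
    intro a b hab
    rw [SimpleGraph.fromEdgeSet_adj, Set.mem_singleton_iff] at hab
    exact (SimpleGraph.mem_edgeSet _).mp (hab.1 ▸ hxyGE)
  have hF'xy : F'.Adj x y := by
    rw [hF', SimpleGraph.sup_adj]
    exact Or.inr ((SimpleGraph.fromEdgeSet_adj _).mpr ⟨rfl, hxyne⟩)
  -- u and v are not reachable in D
  have hNuv : ¬ D.Reachable u v :=
    (SimpleGraph.isBridge_iff.mp (isAcyclic_iff_forall_adj_isBridge.mp hacyc huv))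
  -- x and y are not reachable in D
  have hNxy : ¬ D.Reachable x y := by
    rintro ⟨w⟩
    have hwe : ∀ e ∈ w.edges, e ∈ F.edgeSet := fun e he =>
      ((SimpleGraph.edgeSet_deleteEdges _ ▸ w.edges_subset_edgeSet he) :
        e ∈ F.edgeSet \ {s(u, v)}).1
    have hwuv : s(u, v) ∉ w.edges := fun he =>
      ((SimpleGraph.edgeSet_deleteEdges _ ▸ w.edges_subset_edgeSet he) :
        s(u, v) ∈ F.edgeSet \ {s(u, v)}).2 rfl
    have hPP : P = (w.transfer F hwe).toPath := isAcyclic_iff_path_unique.mp hacyc _ _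
    have : s(u, v) ∈ (w.transfer F hwe).edges :=
      Walk.edges_toPath_subset _ (by rw [← hPP]; exact hP)
    rw [Walk.edges_transfer] at this
    exact hwuv this
  -- reachability in D for non-tree edges of high level
  have hkey : ∀ a b : V, s(a, b) ∈ G.edgeSet → s(a, b) ∉ F.edgeSet →
      ∀ j, i < j → j ≤ ℓ s(a, b) → D.Reachable a b := by
    intro a b haG haF j hij hjl
    obtain ⟨w⟩ := (hspan a b).mpr ((SimpleGraph.mem_edgeSet _).mp haG).reachable
    set Q := w.toPath with hQ
    have huvQ : s(u, v) ∉ Q.1.edges := by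
      intro hmem
      have := hmax a b Q ((SimpleGraph.mem_edgeSet _).mp haG) (fun h2 => haF ((SimpleGraph.mem_edgeSet _).mpr h2)) hmem
      omega
    exact ⟨Q.1.transfer D (fun e he => by
      rw [hD, SimpleGraph.edgeSet_deleteEdges, Set.mem_diff, Set.mem_singleton_iff]
      exact ⟨Q.1.edges_subset_edgeSet he, fun hh => huvQ (hh ▸ he)⟩)⟩
  -- acyclicity of F'
  have hacyc' : F'.IsAcyclic := by
    intro u₀ c hc
    by_cases hxyc : s(x, y) ∈ c.edges
    · have hre : F'.Adj x y ∧ (F' \ SimpleGraph.fromEdgeSet {s(x, y)}).Reachable x y :=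
        SimpleGraph.adj_and_reachable_delete_edges_iff_exists_cycle.mpr ⟨u₀, c, hc, hxyc⟩
      refine hNxy (hre.2.mono ?_)
      intro a b hab
      rw [SimpleGraph.sdiff_adj] at hab
      obtain ⟨h1, h2⟩ := hab
      rw [hF', SimpleGraph.sup_adj] at h1
      rcases h1 with h1 | h1
      · exact h1
      · exact absurd h1 h2
    · have hedges : ∀ e ∈ c.edges, e ∈ F.edgeSet := by
        intro e he
        have h1 : e ∈ F'.edgeSet := c.edges_subset_edgeSet he
        rw [hE'] at h1
        rcases h1 with h1 | h1
        · exact h1.1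
        · exact absurd (h1 : e = s(x, y)) (fun hh => hxyc (hh ▸ he))
      exact hacyc (c.transfer F hedges) (hc.transfer hedges)
  -- spanning property of F'
  have hRuv : F'.Reachable u v := by
    rcases reachable_split P.1 P.2.isTrail hP with ⟨h1, h2⟩ | ⟨h1, h2⟩
    · exact (h1.mono hDF').symm.trans (hF'xy.reachable.trans (h2.mono hDF').symm)
    · exact (h2.mono hDF').trans (hF'xy.symm.reachable.trans (h1.mono hDF'))
  have hspan' : ∀ a b : V, F'.Reachable a b ↔ G.Reachable a b := by
    intro a b
    constructor
    · exact fun h => h.mono hF'G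
    · intro h
      refine reachable_mono' ?_ ((hspan a b).mpr h)
      intro a' b' hab
      by_cases he : s(a', b') = s(u, v)
      · rw [Sym2.eq_iff] at he
        rcases he with ⟨rfl, rfl⟩ | ⟨rfl, rfl⟩
        · exact hRuv
        · exact hRuv.symm
      · exact (hDF' (SimpleGraph.deleteEdges_adj.mpr ⟨hab, by simpa using he⟩)).reachable
  refine ⟨hF'G, hacyc', hspan', ?_⟩
  intro j a b
  rcases le_or_gt j i with hj | hj
  · -- the two level graphs coincide
    have hEq : levelGraph G F ℓ j = levelGraph G F' ℓ' j := by
      rw [← SimpleGraph.edgeSet_inj, levelGraph_edgeSet, levelGraph_edgeSet]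
      ext e
      simp only [Set.mem_union, Set.mem_setOf_eq]
      constructor
      · rintro (heF | ⟨heG, heNF, hle⟩)
        · by_cases heuv : e = s(u, v)
          · subst heuv
            right
            refine ⟨(SimpleGraph.mem_edgeSet _).mpr (hFG huv), ?_, ?_⟩
            · rw [hE']
              rintro (h1 | h1)
              · exact h1.2 rfl
              · exact huvxy h1
            · rw [hℓ'uv]; exact hj
          · left
            rw [hE']
            exact Or.inl ⟨heF, heuv⟩
        · by_cases hexy : e = s(x, y)
          · subst hexy
            left
            rw [hE']
            exact Or.inr rfl
          · have heuv : e ≠ s(u, v) := fun hh => heNF (hh ▸ huvF)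
            have heNF' : e ∉ F'.edgeSet := by
              rw [hE']
              rintro (h1 | h1)
              · exact heNF h1.1
              · exact hexy h1
            right
            refine ⟨heG, heNF', ?_⟩
            rw [hℓ' e heG heNF' heuv]
            exact hle
      · rintro (heF' | ⟨heG, heNF', hle⟩)
        · rw [hE'] at heF'
          rcases heF' with h1 | h1
          · exact Or.inl h1.1
          · rw [(h1 : e = s(x, y))]
            exact Or.inr ⟨hxyGE, hxyFE, hi ▸ hj⟩
        · by_cases heuv : e = s(u, v)
          · exact Or.inl (heuv ▸ huvF)
          · have heNF : e ∉ F.edgeSet := by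
              intro hh
              apply heNF'
              rw [hE']
              exact Or.inl ⟨hh, heuv⟩
            refine Or.inr ⟨heG, heNF, ?_⟩
            rw [← hℓ' e heG heNF' heuv]
            exact hle
    rw [hEq]
  · -- j > i : delete the respective bridges
    have hadj1 : (levelGraph G F ℓ j).Adj u v := by
      rw [levelGraph, SimpleGraph.sup_adj]; exact Or.inl huv
    have hadj2 : (levelGraph G F' ℓ' j).Adj x y := by
      rw [levelGraph, SimpleGraph.sup_adj]; exact Or.inl hF'xy
    have hmono1 : ∀ a' b' : V, ((levelGraph G F ℓ j).deleteEdges {s(u, v)}).Adj a' b' →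
        D.Reachable a' b' := by
      intro a' b' hab
      rw [SimpleGraph.deleteEdges_adj] at hab
      obtain ⟨h1, hne⟩ := hab
      rw [levelGraph, SimpleGraph.sup_adj] at h1
      rcases h1 with h1 | h1
      · exact (SimpleGraph.deleteEdges_adj.mpr ⟨h1, hne⟩).reachable
      · rw [SimpleGraph.fromEdgeSet_adj, Set.mem_setOf_eq] at h1
        obtain ⟨⟨heG, heNF, hle⟩, -⟩ := h1
        exact hkey a' b' heG heNF j hj hle
    have hmono2 : ∀ a' b' : V, ((levelGraph G F' ℓ' j).deleteEdges {s(x, y)}).Adj a' b' →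
        D.Reachable a' b' := by
      intro a' b' hab
      rw [SimpleGraph.deleteEdges_adj] at hab
      obtain ⟨h1, hne⟩ := hab
      rw [levelGraph, SimpleGraph.sup_adj] at h1
      rcases h1 with h1 | h1
      · rw [hF', SimpleGraph.sup_adj] at h1
        rcases h1 with h1 | h1
        · exact h1.reachable
        · rw [SimpleGraph.fromEdgeSet_adj, Set.mem_singleton_iff] at h1
          exact absurd h1.1 (by simpa using hne)
      · rw [SimpleGraph.fromEdgeSet_adj, Set.mem_setOf_eq] at h1
        obtain ⟨⟨heG, heNF', hle⟩, -⟩ := h1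
        by_cases heuv : s(a', b') = s(u, v)
        · rw [heuv, hℓ'uv] at hle; omega
        · have heNF : s(a', b') ∉ F.edgeSet := by
            intro hh
            apply heNF'
            rw [hE']
            exact Or.inl ⟨hh, heuv⟩
          rw [hℓ' _ heG heNF' heuv] at hle
          exact hkey a' b' heG heNF j hj hle
    have hnr1 : ¬ ((levelGraph G F ℓ j).deleteEdges {s(u, v)}).Reachable u v :=
      fun h => hNuv (reachable_mono' hmono1 h)
    have hnr2 : ¬ ((levelGraph G F' ℓ' j).deleteEdges {s(x, y)}).Reachable x y :=
      fun h => hNxy (reachable_mono' hmono2 h)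
    have hdel : (levelGraph G F ℓ j).deleteEdges {s(u, v)} =
        (levelGraph G F' ℓ' j).deleteEdges {s(x, y)} := by
      rw [← SimpleGraph.edgeSet_inj, SimpleGraph.edgeSet_deleteEdges,
        SimpleGraph.edgeSet_deleteEdges, levelGraph_edgeSet, levelGraph_edgeSet]
      ext e
      simp only [Set.mem_diff, Set.mem_union, Set.mem_setOf_eq, Set.mem_singleton_iff]
      constructor
      · rintro ⟨heF | ⟨heG, heNF, hle⟩, hne⟩
        · refine ⟨Or.inl ?_, fun hh => hxyFE (hh ▸ heF)⟩
          rw [hE']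
          exact Or.inl ⟨heF, hne⟩
        · have hexy : e ≠ s(x, y) := by
            intro hh
            rw [hh, ← hi] at hle
            omega
          have heNF' : e ∉ F'.edgeSet := by
            rw [hE']
            rintro (h1 | h1)
            · exact heNF h1.1
            · exact hexy h1
          refine ⟨Or.inr ⟨heG, heNF', ?_⟩, hexy⟩
          rw [hℓ' e heG heNF' hne]
          exact hle
      · rintro ⟨heF' | ⟨heG, heNF', hle⟩, hne⟩
        · rw [hE'] at heF'
          rcases heF' with h1 | h1
          · exact ⟨Or.inl h1.1, h1.2⟩
          · exact absurd h1 hne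
        · have heuv : e ≠ s(u, v) := by
            intro hh
            rw [hh, hℓ'uv] at hle
            omega
          have heNF : e ∉ F.edgeSet := by
            intro hh
            apply heNF'
            rw [hE']
            exact Or.inl ⟨hh, heuv⟩
          refine ⟨Or.inr ⟨heG, heNF, ?_⟩, heuv⟩
          rw [← hℓ' e heG heNF' heuv]
          exact hle
    rw [biconnected_deleteEdges hadj1 hnr1 a b, hdel]
    exact (biconnected_deleteEdges hadj2 hnr2 a b).symm
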